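/- Let K ⊂ Γ be compact. Then there exist constants b₀ > 0 and R > 0, depending only on m, f and K, such that for every λ ∈ Γ with max_{1 ≤ i ≤ m} |λ_i| ≥ R and every μ ∈ K with f(λ) ≤ f(μ), one has (max_{1 ≤ i ≤ m} |λ_i|) · ∑_{i=1}^m f_i(λ) ≥ b₀. -/

import Mathlib

open Filter Topology

/-- The `i`-th partial derivative `fᵢ(x) = ∂f/∂λᵢ(x)`. -/
noncomputable def pd {m : ℕ} (f : (Fin m → ℝ) → ℝ) (x : Fin m → ℝ) (i : Fin m) : ℝ :=
  fderiv ℝ f x (Pi.single i 1)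

/-- The Euclidean norm of a vector in `ℝ^m`. -/
noncomputable def eNorm {m : ℕ} (v : Fin m → ℝ) : ℝ :=
  Real.sqrt (∑ i, (v i) ^ 2)

/-- The unit normal `ν_x = Df(x)/|Df(x)|`. -/
noncomputable def nuv {m : ℕ} (f : (Fin m → ℝ) → ℝ) (x : Fin m → ℝ) : Fin m → ℝ :=
  fun i => pd f x i / eNorm (pd f x)

/-- from (6.13)/(gs13): for compact `K ⊂ Γ` there are `b₀, R > 0` such that
for every `λ ∈ Γ` with `max ᵢ|λᵢ| ≥ R` and every `μ ∈ K` with `f(λ) ≤ f(μ)`,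
`(max ᵢ|λᵢ|) ∑ᵢ fᵢ(λ) ≥ b₀`. -/


lemma clm_apply_eq_sum {m : ℕ} (D : (Fin m → ℝ) →L[ℝ] ℝ) (v : Fin m → ℝ) :
    D v = ∑ i, v i * D (Pi.single i 1) := by
  have hv : v = ∑ i, v i • (Pi.single i 1 : Fin m → ℝ) := by
    funext j
    simp [Finset.sum_apply, Pi.single_apply]
  conv_lhs => rw [hv]
  rw [map_sum]
  simp [smul_eq_mul]

lemma grad_ineq {m : ℕ} {Γ : Set (Fin m → ℝ)}
    {f : (Fin m → ℝ) → ℝ} (hf2 : ConcaveOn ℝ Γ f)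
    {x y : Fin m → ℝ} (hx : x ∈ Γ) (hy : y ∈ Γ)
    {D : (Fin m → ℝ) →L[ℝ] ℝ} (hd : HasFDerivAt f D x) :
    f y ≤ f x + D (y - x) := by
  set g : ℝ → ℝ := fun t => f (x + t • (y - x)) with hg
  have hc : HasDerivAt (fun t : ℝ => x + t • (y - x)) (y - x) 0 := by
    simpa using ((hasDerivAt_id (0:ℝ)).smul_const (y - x)).const_add x
  have hd0 : HasFDerivAt f D (x + (0:ℝ) • (y - x)) := by simpa using hd
  have hgd : HasDerivAt g (D (y - x)) 0 := by
    exact hd0.comp_hasDerivAt 0 hc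
  have hslope : Tendsto (fun t => (g t - g 0) / t) (𝓝[>] (0:ℝ)) (𝓝 (D (y - x))) := by
    have h1 := hasDerivAt_iff_tendsto_slope.1 hgd
    have h2 := h1.mono_left (nhdsWithin_mono _ (show Set.Ioi (0:ℝ) ⊆ {0}ᶜ from fun t ht => ne_of_gt ht))
    simpa only [slope_fun_def, vsub_eq_sub, smul_eq_mul, sub_zero, ← div_eq_inv_mul] using h2
  have hev : ∀ᶠ t in 𝓝[>] (0:ℝ), f y - f x ≤ (g t - g 0) / t := by
    filter_upwards [Ioc_mem_nhdsGT_of_mem (by norm_num : (0:ℝ) ∈ Set.Ico (0:ℝ) 1)] with t ht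
    have ht0 : 0 < t := ht.1
    have hmem := hf2.2 hx hy (by linarith [ht.2] : (0:ℝ) ≤ 1 - t) ht0.le (by ring)
    have hxy : (1 - t) • x + t • y = x + t • (y - x) := by module
    rw [hxy] at hmem
    have hg0 : g 0 = f x := by simp [hg]
    rw [le_div_iff₀ ht0]
    simp only [hg, smul_eq_mul] at hmem hg0 ⊢
    nlinarith
  have hfin : f y - f x ≤ D (y - x) := ge_of_tendsto hslope hev
  linarith


theorem stmt_9 (m : ℕ) (hm : 2 ≤ m)
    (Γ : Set (Fin m → ℝ)) (f : (Fin m → ℝ) → ℝ)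
    (hΓopen : IsOpen Γ) (hΓconv : Convex ℝ Γ) (hΓne : Γ.Nonempty)
    (hΓproper : Γ ≠ Set.univ)
    (hΓcone : ∀ t : ℝ, 0 < t → ∀ x ∈ Γ, t • x ∈ Γ)
    (hΓperm : ∀ π : Equiv.Perm (Fin m), ∀ x ∈ Γ, x ∘ π ∈ Γ)
    (hΓpos : {x : Fin m → ℝ | ∀ i, 0 < x i} ⊆ Γ)
    (hfsmooth : ContDiffOn ℝ (⊤ : ℕ∞) f Γ)
    (hfsymm : ∀ π : Equiv.Perm (Fin m), ∀ x ∈ Γ, f (x ∘ π) = f x)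
    (hf1 : ∀ x ∈ Γ, ∀ i, 0 < pd f x i)
    (hf2 : ConcaveOn ℝ Γ f)
    (K : Set (Fin m → ℝ)) (hK : IsCompact K) (hKΓ : K ⊆ Γ) :
    ∃ b₀ : ℝ, 0 < b₀ ∧ ∃ R : ℝ, 0 < R ∧
      ∀ lam ∈ Γ, R ≤ (⨆ i, |lam i|) → ∀ μ ∈ K, f lam ≤ f μ →
      (⨆ i, |lam i|) * ∑ i, pd f lam i ≥ b₀ := by
  haveI : Nonempty (Fin m) := ⟨⟨0, by omega⟩⟩
  -- differentiability
  have hdiff : ∀ x ∈ Γ, HasFDerivAt f (fderiv ℝ f x) x := fun x hx =>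
    (((hfsmooth.differentiableOn (by simp)).differentiableAt (hΓopen.mem_nhds hx))).hasFDerivAt
  -- the all-ones vector
  set one : Fin m → ℝ := fun _ => 1 with hone_def
  have hone : one ∈ Γ := hΓpos (fun i => one_pos)
  have hadd : ∀ x ∈ Γ, ∀ y ∈ Γ, x + y ∈ Γ := by
    intro x hx y hy
    have h := hΓconv hx hy (by norm_num : (0:ℝ) ≤ 1/2) (by norm_num : (0:ℝ) ≤ 1/2) (by norm_num)
    have h2 := hΓcone 2 (by norm_num) _ h
    have : (2:ℝ) • ((1/2:ℝ) • x + (1/2:ℝ) • y) = x + y := by module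
    rwa [this] at h2
  -- strict gap f(μ) < f(μ+1) for μ ∈ Γ
  have hgap : ∀ μ ∈ Γ, f μ < f (μ + one) := by
    intro μ hμ
    have hμ1 : μ + one ∈ Γ := hadd μ hμ one hone
    have h := grad_ineq hf2 hμ1 hμ (hdiff _ hμ1)
    have he : μ - (μ + one) = -one := by abel
    rw [he, clm_apply_eq_sum] at h
    have hS : ∑ i, (-one) i * (fderiv ℝ f (μ + one)) (Pi.single i 1)
        = -∑ i, pd f (μ + one) i := by
      rw [← Finset.sum_neg_distrib]
      refine Finset.sum_congr rfl fun i _ => ?_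
      simp [hone_def, pd]
    rw [hS] at h
    have hpos : 0 < ∑ i, pd f (μ + one) i :=
      Finset.sum_pos (fun i _ => hf1 _ hμ1 i) Finset.univ_nonempty
    linarith
  by_cases hKne : K.Nonempty
  · -- continuity of the gap on K
    have hfc : ContinuousOn f Γ := hfsmooth.continuousOn
    have hφc : ContinuousOn (fun μ => f (μ + one) - f μ) K := by
      refine ContinuousOn.sub ?_ (hfc.mono hKΓ)
      exact hfc.comp (Continuous.continuousOn (by continuity))
        (fun μ hμ => hadd μ (hKΓ hμ) one hone)
    obtain ⟨μ₀, hμ₀K, hmin⟩ := hK.exists_isMinOn hKne hφc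
    set δ : ℝ := f (μ₀ + one) - f μ₀ with hδ_def
    have hδpos : 0 < δ := by have := hgap μ₀ (hKΓ hμ₀K); linarith
    obtain ⟨C, hC⟩ := hK.isBounded.exists_norm_le -- maybe wrong name
    set C' : ℝ := max C 0 with hC'_def
    refine ⟨δ/2, by linarith, C' + 1, by positivity, ?_⟩
    intro lam hlam hR μ hμ hle
    set M : ℝ := ⨆ i, |lam i| with hM_def
    have hbdd : BddAbove (Set.range fun i => |lam i|) := Set.Finite.bddAbove (Set.finite_range _)
    have habs : ∀ i, |lam i| ≤ M := fun i => le_ciSup hbdd i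
    have hμC : ∀ i, |μ i| ≤ C' := by
      intro i
      calc |μ i| = ‖μ i‖ := rfl
        _ ≤ ‖μ‖ := norm_le_pi_norm μ i
        _ ≤ C := hC μ hμ
        _ ≤ C' := le_max_left _ _
    have hμ1 : μ + one ∈ Γ := hadd μ (hKΓ hμ) one hone
    have h := grad_ineq hf2 hlam hμ1 (hdiff _ hlam)
    rw [clm_apply_eq_sum] at h
    have hterm : ∑ i, (μ + one - lam) i * (fderiv ℝ f lam) (Pi.single i 1)
        ≤ ∑ i, (C' + 1 + M) * pd f lam i := by
      refine Finset.sum_le_sum fun i _ => ?_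
      have hp : 0 < pd f lam i := hf1 _ hlam i
      have h1 : (μ + one - lam) i ≤ C' + 1 + M := by
        have := hμC i
        have := habs i
        simp only [Pi.add_apply, Pi.sub_apply, hone_def]
        cases abs_le.1 (hμC i); cases abs_le.1 (habs i)
        linarith
      exact mul_le_mul_of_nonneg_right h1 hp.le
    rw [← Finset.mul_sum] at hterm
    have hSpos : 0 < ∑ i, pd f lam i :=
      Finset.sum_pos (fun i _ => hf1 _ hlam i) Finset.univ_nonempty
    have hmin' : δ ≤ f (μ + one) - f μ := hmin hμ
    have hRM : C' + 1 ≤ M := hR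
    have hchain : δ ≤ (C' + 1 + M) * ∑ i, pd f lam i := by
      calc δ ≤ f (μ + one) - f μ := hmin'
        _ ≤ f (μ + one) - f lam := by linarith
        _ ≤ (fderiv ℝ f lam) (μ + one - lam) := by linarith [h, clm_apply_eq_sum (fderiv ℝ f lam) (μ + one - lam)]
        _ ≤ (C' + 1 + M) * ∑ i, pd f lam i := by
            rw [clm_apply_eq_sum]; exact hterm
    have h2M : (C' + 1 + M) * ∑ i, pd f lam i ≤ 2 * (M * ∑ i, pd f lam i) := by
      nlinarith
    rw [ge_iff_le]
    linarith
  · refine ⟨1, one_pos, 1, one_pos, ?_⟩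
    intro lam _ _ μ hμ _
    exact absurd ⟨μ, hμ⟩ hKne
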